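/- For every τ ∈ ℂ with Im τ > 0 and every z ∈ ℂ, the Jacobi theta series has the product expansion ϑ(τ,z) = −q^{1/8} ζ^{−1/2} ∏_{n≥1} (1 − q^{n−1}ζ)(1 − q^n ζ^{−1})(1 − q^n), where q^{1/8} = exp(πiτ/4), ζ^{1/2} = exp(πiz), q^n = exp(2πinτ), ζ = exp(2πiz), and the infinite product converges. -/

import Mathlib

open Complex

section JTPaux
open Finset Filter Topology

noncomputable def Pq (q : ℂ) (n : ℕ) : ℂ := ∏ j ∈ Finset.range n, (1 - q ^ (2*j+2))
noncomputable def gb (q : ℂ) (n k : ℕ) : ℂ := Pq q n / (Pq q k * Pq q (n - k))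

lemma hfac {q : ℂ} (hq : ‖q‖ < 1) (j : ℕ) : 1 - q ^ (2*j+2) ≠ 0 := by
  intro h
  have h2 : q ^ (2*j+2) = 1 := by linear_combination -h
  have : ‖q ^ (2*j+2)‖ < 1 := by
    rw [norm_pow]
    exact pow_lt_one₀ (norm_nonneg q) hq (by omega)
  rw [h2] at this; simp at this

lemma hPq {q : ℂ} (hq : ‖q‖ < 1) (n : ℕ) : Pq q n ≠ 0 :=
  Finset.prod_ne_zero_iff.2 fun j _ => hfac hq j

lemma Pq_succ (q : ℂ) (n : ℕ) : Pq q (n+1) = Pq q n * (1 - q ^ (2*n+2)) :=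
  Finset.prod_range_succ _ n

lemma Pq_one (q : ℂ) : Pq q 1 = 1 - q^2 := by simp [Pq]

lemma powq (q : ℂ) {s t u : ℕ} (h : s = t + u) : q^s = q^t * q^u := by rw [h, pow_add]

lemma gb_self {q : ℂ} (hq : ‖q‖ < 1) (n : ℕ) : gb q n n = 1 := by
  simp [gb, show n - n = 0 by omega, show Pq q 0 = 1 from rfl, div_self (hPq hq n)]

lemma gb_left {q : ℂ} (hq : ‖q‖ < 1) (n : ℕ) : gb q n 0 = 1 := by
  simp [gb, show Pq q 0 = 1 from rfl, div_self (hPq hq n)]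

lemma n2 {q : ℂ} (hq : ‖q‖ < 1) : 1 - q^2 ≠ 0 := by
  have := hfac hq 0; simpa using this

lemma gb_two_one {q : ℂ} (hq : ‖q‖ < 1) : gb q 2 1 = 1 + q^2 := by
  have h1 := n2 hq
  have h2 : (1:ℂ) - q^4 ≠ 0 := by have := hfac hq 1; simpa using this
  simp only [gb, show (2:ℕ) - 1 = 1 from rfl, Pq_one, show (2:ℕ) = 1 + 1 from rfl, Pq_succ, Pq_one, show Pq q 0 = 1 from rfl]
  rw [show 2*1+2 = 4 from rfl]
  field_simp
  ring

lemma gb_edge_high {q : ℂ} (hq : ‖q‖ < 1) (c : ℕ) :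
    gb q (c+3) (c+2) = 1 + q^(2*c+4) + q^2 * gb q (c+1) c := by
  have e1 : c+3-(c+2) = 1 := by omega
  have e2 : c+1-c = 1 := by omega
  have hE1 : Pq q (c+1) = Pq q c * (1 - q^(2*c+2)) := Pq_succ q c
  have hE2 : Pq q (c+2) = Pq q c * (1 - q^(2*c+2)) * (1 - q^(2*c+2)*q^2) := by
    rw [show c+2 = (c+1)+1 from rfl, Pq_succ, hE1, powq q (show 2*(c+1)+2 = (2*c+2)+2 by ring)]
  have hE3 : Pq q (c+3) = Pq q c * (1 - q^(2*c+2)) * (1 - q^(2*c+2)*q^2) * (1 - q^(2*c+2)*q^4) := by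
    rw [show c+3 = (c+2)+1 from rfl, Pq_succ, hE2, powq q (show 2*(c+2)+2 = (2*c+2)+4 by ring)]
  have hX : q^(2*c+4) = q^(2*c+2)*q^2 := powq q (by ring)
  have nA : 1 - q^(2*c+2) ≠ 0 := hfac hq c
  have nA2 : 1 - q^(2*c+2)*q^2 ≠ 0 := by
    have := hfac hq (c+1); rwa [powq q (show 2*(c+1)+2 = (2*c+2)+2 by ring)] at this
  have nA3 : 1 - q^(2*c+2)*q^4 ≠ 0 := by
    have := hfac hq (c+2); rwa [powq q (show 2*(c+2)+2 = (2*c+2)+4 by ring)] at this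
  have nPA : Pq q c ≠ 0 := hPq hq c
  have nQ2 := n2 hq
  unfold gb
  rw [e1, e2, hE3, hE2, hE1, hX, Pq_one]
  generalize q^(2*c+2) = A at nA nA2 nA3 ⊢
  generalize Pq q c = PA at nPA ⊢
  field_simp
  ring

lemma gb_edge_low {q : ℂ} (hq : ‖q‖ < 1) (c : ℕ) :
    gb q (c+3) 1 = 1 + q^(2*c+4) + q^2 * gb q (c+1) 1 := by
  have e1 : c+3-1 = c+2 := by omega
  have e2 : c+1-1 = c := by omega
  have hE1 : Pq q (c+1) = Pq q c * (1 - q^(2*c+2)) := Pq_succ q c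
  have hE2 : Pq q (c+2) = Pq q c * (1 - q^(2*c+2)) * (1 - q^(2*c+2)*q^2) := by
    rw [show c+2 = (c+1)+1 from rfl, Pq_succ, hE1, powq q (show 2*(c+1)+2 = (2*c+2)+2 by ring)]
  have hE3 : Pq q (c+3) = Pq q c * (1 - q^(2*c+2)) * (1 - q^(2*c+2)*q^2) * (1 - q^(2*c+2)*q^4) := by
    rw [show c+3 = (c+2)+1 from rfl, Pq_succ, hE2, powq q (show 2*(c+2)+2 = (2*c+2)+4 by ring)]
  have hX : q^(2*c+4) = q^(2*c+2)*q^2 := powq q (by ring)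
  have nA : 1 - q^(2*c+2) ≠ 0 := hfac hq c
  have nA2 : 1 - q^(2*c+2)*q^2 ≠ 0 := by
    have := hfac hq (c+1); rwa [powq q (show 2*(c+1)+2 = (2*c+2)+2 by ring)] at this
  have nA3 : 1 - q^(2*c+2)*q^4 ≠ 0 := by
    have := hfac hq (c+2); rwa [powq q (show 2*(c+2)+2 = (2*c+2)+4 by ring)] at this
  have nPA : Pq q c ≠ 0 := hPq hq c
  have nQ2 := n2 hq
  unfold gb
  rw [e1, e2, hE3, hE2, hE1, hX, Pq_one]
  generalize q^(2*c+2) = A at nA nA2 nA3 ⊢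
  generalize Pq q c = PA at nPA ⊢
  field_simp
  ring
set_option maxHeartbeats 2000000 in
lemma gb_key {q : ℂ} (hq : ‖q‖ < 1) (a b : ℕ) :
    gb q (a+b+4) (a+2) = (1 + q^(2*(a+b+3))) * gb q (a+b+2) (a+1)
      + q^(2*(b+2)) * gb q (a+b+2) a + q^(2*(a+2)) * gb q (a+b+2) (a+2) := by
  have hEa1 : Pq q (a+1) = Pq q a * (1 - q^(2*a+2)) := Pq_succ q a
  have hEb1 : Pq q (b+1) = Pq q b * (1 - q^(2*b+2)) := Pq_succ q b
  have hEa2 : Pq q (a+2) = Pq q a * (1 - q^(2*a+2)) * (1 - q^(2*a+2)*q^2) := by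
    rw [show a+2 = (a+1)+1 from rfl, Pq_succ, hEa1, powq q (show 2*(a+1)+2 = (2*a+2)+2 by ring)]
  have hEb2 : Pq q (b+2) = Pq q b * (1 - q^(2*b+2)) * (1 - q^(2*b+2)*q^2) := by
    rw [show b+2 = (b+1)+1 from rfl, Pq_succ, hEb1, powq q (show 2*(b+1)+2 = (2*b+2)+2 by ring)]
  have hE4 : Pq q (a+b+4) = Pq q (a+b+2) * (1 - q^(2*a+2)*(q^(2*b+2)*q^2))
      * (1 - q^(2*a+2)*(q^(2*b+2)*q^4)) := by
    rw [show a+b+4 = (a+b+3)+1 from rfl, Pq_succ, show a+b+3 = (a+b+2)+1 from rfl, Pq_succ,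
      powq q (show 2*(a+b+2)+2 = (2*a+2)+((2*b+2)+2) by ring),
      powq q (show (2*b+2)+2 = (2*b+2)+2 from rfl),
      powq q (show 2*(a+b+3)+2 = (2*a+2)+((2*b+2)+4) by ring),
      powq q (show (2*b+2)+4 = (2*b+2)+4 from rfl)]
  have hX1 : q^(2*(a+b+3)) = q^(2*a+2)*(q^(2*b+2)*q^2) := by
    rw [powq q (show 2*(a+b+3) = (2*a+2)+((2*b+2)+2) by ring), powq q (rfl : (2*b+2)+2 = (2*b+2)+2)]
  have hX2 : q^(2*(b+2)) = q^(2*b+2)*q^2 := powq q (by ring)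
  have hX3 : q^(2*(a+2)) = q^(2*a+2)*q^2 := powq q (by ring)
  have e1 : a+b+4-(a+2) = b+2 := by omega
  have e2 : a+b+2-(a+1) = b+1 := by omega
  have e3 : a+b+2-a = b+2 := by omega
  have e4 : a+b+2-(a+2) = b := by omega
  have nA : 1 - q^(2*a+2) ≠ 0 := hfac hq a
  have nB : 1 - q^(2*b+2) ≠ 0 := hfac hq b
  have nA2 : 1 - q^(2*a+2)*q^2 ≠ 0 := by
    have := hfac hq (a+1); rwa [powq q (show 2*(a+1)+2 = (2*a+2)+2 by ring)] at this
  have nB2 : 1 - q^(2*b+2)*q^2 ≠ 0 := by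
    have := hfac hq (b+1); rwa [powq q (show 2*(b+1)+2 = (2*b+2)+2 by ring)] at this
  have nPA : Pq q a ≠ 0 := hPq hq a
  have nPB : Pq q b ≠ 0 := hPq hq b
  have nPC : Pq q (a+b+2) ≠ 0 := hPq hq (a+b+2)
  unfold gb
  rw [e1, e2, e3, e4, hE4, hEa2, hEb2, hEa1, hEb1, hX1, hX2, hX3]
  generalize q^(2*a+2) = A at nA nA2 ⊢
  generalize q^(2*b+2) = B at nB nB2 ⊢
  generalize Pq q a = PA at nPA ⊢
  generalize Pq q b = PB at nPB ⊢
  generalize Pq q (a+b+2) = PC at nPC ⊢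
  rw [← mul_div_assoc, ← mul_div_assoc, ← mul_div_assoc]
  rw [div_add_div _ _ (by exact mul_ne_zero (mul_ne_zero nPA nA) (mul_ne_zero nPB nB)) (by exact mul_ne_zero nPA (mul_ne_zero (mul_ne_zero nPB nB) nB2)), div_add_div _ _ (by exact mul_ne_zero (mul_ne_zero (mul_ne_zero nPA nA) (mul_ne_zero nPB nB)) (mul_ne_zero nPA (mul_ne_zero (mul_ne_zero nPB nB) nB2))) (by exact mul_ne_zero (mul_ne_zero (mul_ne_zero nPA nA) nA2) nPB), div_eq_div_iff (by exact mul_ne_zero (mul_ne_zero (mul_ne_zero nPA nA) nA2) (mul_ne_zero (mul_ne_zero nPB nB) nB2)) (by exact mul_ne_zero (mul_ne_zero (mul_ne_zero (mul_ne_zero nPA nA) (mul_ne_zero nPB nB)) (mul_ne_zero nPA (mul_ne_zero (mul_ne_zero nPB nB) nB2))) (mul_ne_zero (mul_ne_zero (mul_ne_zero nPA nA) nA2) nPB))]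
  ring

noncomputable def cc (q x : ℂ) (N : ℕ) (m : ℤ) : ℂ :=
  if -(N:ℤ) ≤ m ∧ m ≤ (N:ℤ) then gb q (2*N) ((N:ℤ) + m).toNat * q ^ (m^2) * x ^ m else 0

lemma cc_pos (q x : ℂ) (N : ℕ) (m : ℤ) (h1 : -(N:ℤ) ≤ m) (h2 : m ≤ (N:ℤ)) :
    cc q x N m = gb q (2*N) ((N:ℤ) + m).toNat * q ^ (m^2) * x ^ m := by
  unfold cc; rw [if_pos ⟨h1, h2⟩]

lemma cc_zero (q x : ℂ) (N : ℕ) (m : ℤ) (h : (N:ℤ) < m ∨ m < -(N:ℤ)) : cc q x N m = 0 := by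
  unfold cc; rw [if_neg]; omega

variable {q x : ℂ}

lemma shift_down (hq0 : q ≠ 0) (hx : x ≠ 0) (g : ℂ) (t s : ℕ) (m : ℤ)
    (h : (s:ℤ) = (t:ℤ) + 1 - 2*m) :
    q^t * x * (g * q^((m-1)^2) * x^(m-1)) = q^s * g * (q^(m^2) * x^m) := by
  have h1 : (q:ℂ)^t * q^((m-1)^2) = q^s * q^(m^2) := by
    rw [← zpow_natCast q t, ← zpow_natCast q s, ← zpow_add₀ hq0, ← zpow_add₀ hq0]
    congr 1
    rw [h]; ring
  have h2 : x * x^(m-1) = x^m := by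
    rw [mul_comm, ← zpow_add_one₀ hx, sub_add_cancel]
  calc q^t * x * (g * q^((m-1)^2) * x^(m-1))
      = (q^t * q^((m-1)^2)) * (x * x^(m-1)) * g := by ring
    _ = (q^s * q^(m^2)) * x^m * g := by rw [h1, h2]
    _ = q^s * g * (q^(m^2) * x^m) := by ring

lemma shift_up (hq0 : q ≠ 0) (hx : x ≠ 0) (g : ℂ) (t s : ℕ) (m : ℤ)
    (h : (s:ℤ) = (t:ℤ) + 1 + 2*m) :
    q^t * x⁻¹ * (g * q^((m+1)^2) * x^(m+1)) = q^s * g * (q^(m^2) * x^m) := by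
  have h1 : (q:ℂ)^t * q^((m+1)^2) = q^s * q^(m^2) := by
    rw [← zpow_natCast q t, ← zpow_natCast q s, ← zpow_add₀ hq0, ← zpow_add₀ hq0]
    congr 1
    rw [h]; ring
  have h2 : x⁻¹ * x^(m+1) = x^m := by
    rw [zpow_add_one₀ hx]
    field_simp
  calc q^t * x⁻¹ * (g * q^((m+1)^2) * x^(m+1))
      = (q^t * q^((m+1)^2)) * (x⁻¹ * x^(m+1)) * g := by ring
    _ = (q^s * q^(m^2)) * x^m * g := by rw [h1, h2]
    _ = q^s * g * (q^(m^2) * x^m) := by ring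

set_option maxHeartbeats 1000000 in
lemma cc_step {q x : ℂ} (hq : ‖q‖ < 1) (hq0 : q ≠ 0) (hx : x ≠ 0) (N : ℕ) (m : ℤ) :
    cc q x (N+1) m = (1 + q^(4*N+2)) * cc q x N m
      + q^(2*N+1) * x * cc q x N (m-1) + q^(2*N+1) * x⁻¹ * cc q x N (m+1) := by
  by_cases hA : m = (N:ℤ)+1
  · subst hA
    rw [cc_pos q x (N+1) ((N:ℤ)+1) (by push_cast; try omega) (by push_cast; try omega),
        cc_zero q x N ((N:ℤ)+1) (by omega), cc_zero q x N ((N:ℤ)+1+1) (by omega),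
        cc_pos q x N ((N:ℤ)+1-1) (by omega) (by omega),
        show ((((N+1:ℕ)):ℤ) + ((N:ℤ)+1)).toNat = 2*(N+1) by omega,
        show (((N:ℤ)) + ((N:ℤ)+1-1)).toNat = 2*N by omega,
        gb_self hq, gb_self hq,
        shift_down hq0 hx 1 (2*N+1) 0 ((N:ℤ)+1) (by push_cast; ring)]
    ring
  by_cases hB : m = -(N:ℤ)-1
  · subst hB
    rw [cc_pos q x (N+1) (-(N:ℤ)-1) (by push_cast; try omega) (by push_cast; try omega),
        cc_zero q x N (-(N:ℤ)-1) (by omega), cc_zero q x N (-(N:ℤ)-1-1) (by omega),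
        cc_pos q x N (-(N:ℤ)-1+1) (by omega) (by omega),
        show ((((N+1:ℕ)):ℤ) + (-(N:ℤ)-1)).toNat = 0 by omega,
        show (((N:ℤ)) + (-(N:ℤ)-1+1)).toNat = 0 by omega,
        gb_left hq, gb_left hq,
        shift_up hq0 hx 1 (2*N+1) 0 (-(N:ℤ)-1) (by push_cast; ring)]
    ring
  by_cases hD : (N:ℤ) < m ∨ m < -(N:ℤ)
  · rw [cc_zero q x (N+1) m (by push_cast; try omega), cc_zero q x N m (by omega),
      cc_zero q x N (m-1) (by omega), cc_zero q x N (m+1) (by omega)]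
    ring
  by_cases hC2 : m = (N:ℤ)
  · subst hC2
    by_cases hN : N = 0
    · subst hN
      rw [cc_pos q x (0+1) ((0:ℕ):ℤ) (by push_cast; try omega) (by push_cast; try omega),
          cc_pos q x 0 ((0:ℕ):ℤ) (by omega) (by omega),
          cc_zero q x 0 (((0:ℕ):ℤ)-1) (by omega), cc_zero q x 0 (((0:ℕ):ℤ)+1) (by omega)]
      norm_num [gb_self hq, gb_two_one hq]
    · obtain ⟨c, rfl⟩ : ∃ c, N = c+1 := ⟨N-1, by omega⟩
      rw [cc_pos q x (c+1+1) (((c+1:ℕ)):ℤ) (by push_cast; try omega) (by push_cast; try omega),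
          cc_pos q x (c+1) (((c+1:ℕ)):ℤ) (by omega) (by omega),
          cc_pos q x (c+1) ((((c+1:ℕ)):ℤ)-1) (by omega) (by omega),
          cc_zero q x (c+1) ((((c+1:ℕ)):ℤ)+1) (by omega),
          show ((((c+1:ℕ)):ℤ) + (((c+1:ℕ)):ℤ)).toNat = 2*(c+1) by omega,
          gb_self hq,
          show ((((c+1+1:ℕ)):ℤ) + (((c+1:ℕ)):ℤ)).toNat = (2*c+1)+2 by omega,
          show 2*(c+1+1) = (2*c+1)+3 by omega,
          gb_edge_high hq (2*c+1),
          show ((((c+1:ℕ)):ℤ) + ((((c+1:ℕ)):ℤ)-1)).toNat = 2*c+1 by omega,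
          show 2*(c+1) = (2*c+1)+1 by omega,
          shift_down hq0 hx (gb q ((2*c+1)+1) (2*c+1)) (2*c+1+1+1) 2 (((c+1:ℕ)):ℤ)
            (by push_cast; ring)]
      ring
  by_cases hC3 : m = -(N:ℤ)
  · subst hC3
    obtain ⟨c, rfl⟩ : ∃ c, N = c+1 := ⟨N-1, by omega⟩
    rw [cc_pos q x (c+1+1) (-(((c+1:ℕ)):ℤ)) (by push_cast; try omega) (by push_cast; try omega),
        cc_pos q x (c+1) (-(((c+1:ℕ)):ℤ)) (by omega) (by omega),
        cc_zero q x (c+1) (-(((c+1:ℕ)):ℤ)-1) (by omega),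
        cc_pos q x (c+1) (-(((c+1:ℕ)):ℤ)+1) (by omega) (by omega),
        show ((((c+1:ℕ)):ℤ) + -(((c+1:ℕ)):ℤ)).toNat = 0 by omega,
        gb_left hq,
        show ((((c+1+1:ℕ)):ℤ) + -(((c+1:ℕ)):ℤ)).toNat = 1 by omega,
        show 2*(c+1+1) = (2*c+1)+3 by omega,
        gb_edge_low hq (2*c+1),
        show ((((c+1:ℕ)):ℤ) + (-(((c+1:ℕ)):ℤ)+1)).toNat = 1 by omega,
        show 2*(c+1) = (2*c+1)+1 by omega,
        shift_up hq0 hx (gb q ((2*c+1)+1) 1) (2*c+1+1+1) 2 (-(((c+1:ℕ)):ℤ))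
          (by push_cast; ring)]
    ring
  · obtain ⟨a, ha⟩ : ∃ a : ℕ, (a:ℤ) = (N:ℤ) + m - 1 := ⟨((N:ℤ)+m-1).toNat, by omega⟩
    obtain ⟨b, hb⟩ : ∃ b : ℕ, (b:ℤ) = (N:ℤ) - m - 1 := ⟨((N:ℤ)-m-1).toNat, by omega⟩
    rw [cc_pos q x (N+1) m (by push_cast; try omega) (by push_cast; try omega),
        cc_pos q x N m (by omega) (by omega),
        cc_pos q x N (m-1) (by omega) (by omega),
        cc_pos q x N (m+1) (by omega) (by omega),
        show ((((N+1:ℕ)):ℤ) + m).toNat = a+2 by omega,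
        show 2*(N+1) = a+b+4 by omega,
        show (((N:ℤ)) + m).toNat = a+1 by omega,
        show (((N:ℤ)) + (m-1)).toNat = a by omega,
        show (((N:ℤ)) + (m+1)).toNat = a+2 by omega,
        show 2*N = a+b+2 by omega,
        gb_key hq a b,
        shift_down hq0 hx (gb q (a+b+2) a) (a+b+2+1) (2*(b+2)) m (by omega),
        shift_up hq0 hx (gb q (a+b+2) (a+2)) (a+b+2+1) (2*(a+2)) m (by omega),
        show 4*N+2 = 2*(a+b+3) by omega]
    ring

lemma cc_shiftR {q x : ℂ} (N : ℕ) :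
    ∑ m ∈ Finset.Icc (-((N+1:ℕ):ℤ)) ((N+1:ℕ):ℤ), cc q x N (m-1)
      = ∑ m ∈ Finset.Icc (-((N:ℕ):ℤ)) ((N:ℕ):ℤ), cc q x N m := by
  rw [← Finset.sum_subset (Finset.Icc_subset_Icc (by push_cast; omega) (by push_cast; omega) :
      Finset.Icc (-((N:ℕ):ℤ)+1) (((N:ℕ):ℤ)+1) ⊆ Finset.Icc (-((N+1:ℕ):ℤ)) ((N+1:ℕ):ℤ))
      (fun y hy hyn => cc_zero q x N (y-1) (by simp [Finset.mem_Icc] at hy hyn; omega))]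
  apply Finset.sum_nbij' (i := fun m => m - 1) (j := fun m => m + 1)
  · intro a ha; simp [Finset.mem_Icc] at ha ⊢; omega
  · intro a ha; simp [Finset.mem_Icc] at ha ⊢; omega
  · intro a _; ring
  · intro a _; ring
  · intro a _; rfl

lemma cc_shiftL {q x : ℂ} (N : ℕ) :
    ∑ m ∈ Finset.Icc (-((N+1:ℕ):ℤ)) ((N+1:ℕ):ℤ), cc q x N (m+1)
      = ∑ m ∈ Finset.Icc (-((N:ℕ):ℤ)) ((N:ℕ):ℤ), cc q x N m := by
  rw [← Finset.sum_subset (Finset.Icc_subset_Icc (by push_cast; omega) (by push_cast; omega) :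
      Finset.Icc (-((N:ℕ):ℤ)-1) (((N:ℕ):ℤ)-1) ⊆ Finset.Icc (-((N+1:ℕ):ℤ)) ((N+1:ℕ):ℤ))
      (fun y hy hyn => cc_zero q x N (y+1) (by simp [Finset.mem_Icc] at hy hyn; omega))]
  apply Finset.sum_nbij' (i := fun m => m + 1) (j := fun m => m - 1)
  · intro a ha; simp [Finset.mem_Icc] at ha ⊢; omega
  · intro a ha; simp [Finset.mem_Icc] at ha ⊢; omega
  · intro a _; ring
  · intro a _; ring
  · intro a _; rfl

lemma cc_extend {q x : ℂ} (N : ℕ) :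
    ∑ m ∈ Finset.Icc (-((N:ℕ):ℤ)) ((N:ℕ):ℤ), cc q x N m
      = ∑ m ∈ Finset.Icc (-((N+1:ℕ):ℤ)) ((N+1:ℕ):ℤ), cc q x N m :=
  Finset.sum_subset (Finset.Icc_subset_Icc (by push_cast; omega) (by push_cast; omega))
    (fun y hy hyn => cc_zero q x N y (by simp [Finset.mem_Icc] at hy hyn; omega))

lemma finJTP {q x : ℂ} (hq : ‖q‖ < 1) (hq0 : q ≠ 0) (hx : x ≠ 0) (N : ℕ) :
    ∏ j ∈ Finset.range N, ((1 + x * q^(2*j+1)) * (1 + x⁻¹ * q^(2*j+1)))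
      = ∑ m ∈ Finset.Icc (-(N:ℤ)) (N:ℤ), cc q x N m := by
  induction N with
  | zero =>
    simp [cc, gb, show Pq q 0 = 1 from rfl]
  | succ N ih =>
    rw [Finset.prod_range_succ, ih]
    have hfac2 : (1 + x * q^(2*N+1)) * (1 + x⁻¹ * q^(2*N+1))
        = 1 + q^(4*N+2) + q^(2*N+1)*x + q^(2*N+1)*x⁻¹ := by
      field_simp
      ring
    rw [hfac2]
    have expand : ∀ m : ℤ, cc q x N m * (1 + q^(4*N+2) + q^(2*N+1)*x + q^(2*N+1)*x⁻¹)
        = (1 + q^(4*N+2)) * cc q x N m + q^(2*N+1) * x * cc q x N m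
          + q^(2*N+1) * x⁻¹ * cc q x N m := fun m => by ring
    calc (∑ m ∈ Finset.Icc (-(N:ℤ)) (N:ℤ), cc q x N m)
          * (1 + q^(4*N+2) + q^(2*N+1)*x + q^(2*N+1)*x⁻¹)
        = ∑ m ∈ Finset.Icc (-(N:ℤ)) (N:ℤ), ((1 + q^(4*N+2)) * cc q x N m
            + q^(2*N+1) * x * cc q x N m + q^(2*N+1) * x⁻¹ * cc q x N m) := by
          rw [Finset.sum_mul]
          exact Finset.sum_congr rfl fun m _ => expand m
      _ = (∑ m ∈ Finset.Icc (-(N:ℤ)) (N:ℤ), (1 + q^(4*N+2)) * cc q x N m)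
            + (∑ m ∈ Finset.Icc (-(N:ℤ)) (N:ℤ), q^(2*N+1) * x * cc q x N m)
            + (∑ m ∈ Finset.Icc (-(N:ℤ)) (N:ℤ), q^(2*N+1) * x⁻¹ * cc q x N m) := by
          rw [← Finset.sum_add_distrib, ← Finset.sum_add_distrib]
      _ = (∑ m ∈ Finset.Icc (-((N+1:ℕ):ℤ)) ((N+1:ℕ):ℤ), (1 + q^(4*N+2)) * cc q x N m)
            + (∑ m ∈ Finset.Icc (-((N+1:ℕ):ℤ)) ((N+1:ℕ):ℤ), q^(2*N+1) * x * cc q x N (m-1))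
            + (∑ m ∈ Finset.Icc (-((N+1:ℕ):ℤ)) ((N+1:ℕ):ℤ), q^(2*N+1) * x⁻¹ * cc q x N (m+1)) := by
          rw [← Finset.mul_sum, ← Finset.mul_sum, ← Finset.mul_sum, ← Finset.mul_sum,
            ← Finset.mul_sum, ← Finset.mul_sum, cc_shiftR, cc_shiftL, cc_extend]
      _ = ∑ m ∈ Finset.Icc (-((N+1:ℕ):ℤ)) ((N+1:ℕ):ℤ), cc q x (N+1) m := by
          rw [← Finset.sum_add_distrib, ← Finset.sum_add_distrib]
          exact Finset.sum_congr rfl fun m _ => (cc_step hq hq0 hx N m).symm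


lemma hasProd_zero_of_eq_zero {f : ℕ → ℂ} (n0 : ℕ) (h : f n0 = 0) : HasProd f 0 := by
  have hev : ∀ᶠ s in (atTop : Filter (Finset ℕ)), ∏ i ∈ s, f i = 0 :=
    Filter.eventually_atTop.2 ⟨{n0}, fun s hs =>
      Finset.prod_eq_zero (Finset.singleton_subset_iff.1 hs) h⟩
  exact tendsto_const_nhds.congr' (hev.mono fun s hsi => hsi.symm)

lemma log_summable_of_summable {a : ℕ → ℂ} (ha : Summable a) :
    Summable (fun n => Complex.log (1 + a n)) := by
  have hn : Tendsto (fun n => ‖a n‖) atTop (𝓝 0) := by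
    simpa using ha.tendsto_atTop_zero.norm
  have hev : ∀ᶠ n in atTop, ‖a n‖ < 1/2 := hn.eventually_lt_const (by norm_num)
  apply Summable.of_norm_bounded_eventually (g := fun n => 3/2 * ‖a n‖) (ha.norm.mul_left (3/2))
  rw [Nat.cofinite_eq_atTop]
  filter_upwards [hev] with n hle
  exact Complex.norm_log_one_add_half_le_self hle.le

lemma multipliable_one_add_of_summable' {a : ℕ → ℂ} (ha : Summable a) :
    Multipliable (fun n => 1 + a n) := by
  by_cases h0 : ∀ n, 1 + a n ≠ 0
  · exact Complex.multipliable_of_summable_log (f := fun n => 1 + a n) (log_summable_of_summable ha)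
  · push_neg at h0
    obtain ⟨n0, hn0⟩ := h0
    exact ⟨0, hasProd_zero_of_eq_zero n0 hn0⟩

lemma tprod_one_add_ne_zero {a : ℕ → ℂ} (ha : Summable a) (h0 : ∀ n, 1 + a n ≠ 0) :
    (∏' n, (1 + a n)) ≠ 0 := by
  have := Complex.cexp_tsum_eq_tprod (f := fun n => 1 + a n) h0 (log_summable_of_summable ha)
  rw [← this]
  exact Complex.exp_ne_zero _

lemma summable_cr {c r : ℂ} (hr : ‖r‖ < 1) : Summable (fun n : ℕ => c * r^n) :=
  (summable_geometric_of_norm_lt_one hr).mul_left c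

lemma summable_aux {ρ σ : ℝ} (h0 : 0 ≤ ρ) (hρ : ρ < 1) (hσ : 0 ≤ σ) :
    Summable (fun n : ℕ => ρ^(n^2) * σ^n) := by
  have ht : Tendsto (fun n : ℕ => ρ^n * σ) atTop (𝓝 (0 * σ)) :=
    (tendsto_pow_atTop_nhds_zero_of_lt_one h0 hρ).mul_const σ
  rw [zero_mul] at ht
  have hev : ∀ᶠ n in atTop, ρ^n * σ < 1/2 := ht.eventually_lt_const (by norm_num)
  apply Summable.of_norm_bounded_eventually (g := fun n : ℕ => (1/2)^n)
    (summable_geometric_of_lt_one (by norm_num) (by norm_num))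
  rw [Nat.cofinite_eq_atTop]
  filter_upwards [hev] with n hn
  have hx1 : ρ^(n^2) * σ^n = (ρ^n * σ)^n := by
    rw [mul_pow, ← pow_mul, pow_two]
  rw [_root_.Real.norm_of_nonneg (by positivity), hx1]
  exact pow_le_pow_left₀ (by positivity) hn.le n

section Analysis
variable {q x : ℂ}

lemma hq2 (hq : ‖q‖ < 1) : ‖q^2‖ < 1 := by
  rw [norm_pow]; exact pow_lt_one₀ (norm_nonneg q) hq two_ne_zero

lemma mult1 (hq : ‖q‖ < 1) : Multipliable (fun n : ℕ => 1 + x * q^(2*n+1)) := by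
  refine (multipliable_one_add_of_summable' (summable_cr (c := x*q) (hq2 hq))).congr fun n => ?_
  rw [← pow_mul]; ring

lemma mult2 (hq : ‖q‖ < 1) : Multipliable (fun n : ℕ => 1 + x⁻¹ * q^(2*n+1)) :=
  mult1 (x := x⁻¹) hq

lemma mult3 (hq : ‖q‖ < 1) : Multipliable (fun n : ℕ => 1 - q^(2*n+2)) := by
  refine (multipliable_one_add_of_summable' (summable_cr (c := -(q^2)) (hq2 hq))).congr fun n => ?_
  rw [← pow_mul]; ring

lemma multA (hq : ‖q‖ < 1) :
    Multipliable (fun n : ℕ => (1 + x * q^(2*n+1)) * (1 + x⁻¹ * q^(2*n+1)) * (1 - q^(2*n+2))) :=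
  ((mult1 hq).mul (mult2 hq)).mul (mult3 hq)

lemma PqTendsto (hq : ‖q‖ < 1) :
    Tendsto (fun N => Pq q N) atTop (𝓝 (∏' n : ℕ, (1 - q^(2*n+2)))) :=
  (mult3 hq).hasProd.tendsto_prod_nat

lemma LP_ne_zero (hq : ‖q‖ < 1) : (∏' n : ℕ, (1 - q^(2*n+2))) ≠ 0 := by
  have he : (fun n : ℕ => 1 + (-(q^2)) * (q^2)^n) = fun n : ℕ => 1 - q^(2*n+2) := by
    funext n; rw [← pow_mul]; ring
  rw [← he]
  refine tprod_one_add_ne_zero (summable_cr (hq2 hq)) fun n => ?_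
  rw [show (1 : ℂ) + (-(q^2)) * (q^2)^n = 1 - q^(2*n+2) from congrFun he n]
  exact hfac hq n

lemma tendsto_two_mul : Tendsto (fun N : ℕ => 2*N) atTop atTop :=
  tendsto_atTop_atTop.2 fun b => ⟨b, fun a ha => by omega⟩

lemma ratioTendsto (hq : ‖q‖ < 1) :
    Tendsto (fun N => Pq q (2*N) / Pq q N) atTop (𝓝 1) := by
  have h := ((PqTendsto hq).comp tendsto_two_mul).div (PqTendsto hq) (LP_ne_zero hq)
  rwa [div_self (LP_ne_zero hq)] at h

lemma lhsTendsto (hq : ‖q‖ < 1) :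
    Tendsto (fun N => Pq q (2*N) * ∏ j ∈ Finset.range N, ((1 + x * q^(2*j+1)) * (1 + x⁻¹ * q^(2*j+1))))
      atTop (𝓝 (∏' n : ℕ, ((1 + x * q^(2*n+1)) * (1 + x⁻¹ * q^(2*n+1)) * (1 - q^(2*n+2))))) := by
  have h := ((multA (x := x) hq).hasProd.tendsto_prod_nat).mul (ratioTendsto hq)
  rw [mul_one] at h
  refine h.congr fun N => ?_
  have hPr : ∏ n ∈ Finset.range N, ((1 + x * q^(2*n+1)) * (1 + x⁻¹ * q^(2*n+1)) * (1 - q^(2*n+2)))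
      = (∏ j ∈ Finset.range N, ((1 + x * q^(2*j+1)) * (1 + x⁻¹ * q^(2*j+1)))) * Pq q N := by
    simp only [Pq]
    rw [← Finset.prod_mul_distrib]
  rw [hPr]
  field_simp [hPq hq N]

end Analysis

section Analysis2
variable {q x : ℂ}

lemma norm_q_zpow_sq (q : ℂ) (m : ℤ) : ‖q^(m^2)‖ = ‖q‖^(m.natAbs^2) := by
  rw [show m^2 = ((m.natAbs^2 : ℕ) : ℤ) by push_cast; exact (_root_.sq_abs m).symm, zpow_natCast,
    norm_pow]

lemma F_tendsto (hq : ‖q‖ < 1) (hq0 : q ≠ 0) (hx : x ≠ 0) (m : ℤ) :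
    Tendsto (fun N => Pq q (2*N) * cc q x N m) atTop (𝓝 (q^(m^2) * x^m)) := by
  have t1 : Tendsto (fun N : ℕ => (((N:ℤ)+m).toNat)) atTop atTop :=
    tendsto_atTop_atTop.2 fun b => ⟨b + m.natAbs, fun a ha => by omega⟩
  have t2 : Tendsto (fun N : ℕ => (((N:ℤ)-m).toNat)) atTop atTop :=
    tendsto_atTop_atTop.2 fun b => ⟨b + m.natAbs, fun a ha => by omega⟩
  have hk : Tendsto (fun N : ℕ => Pq q (((N:ℤ)+m).toNat)) atTop
      (𝓝 (∏' n : ℕ, (1 - q^(2*n+2)))) := (PqTendsto hq).comp t1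
  have hk' : Tendsto (fun N : ℕ => Pq q (((N:ℤ)-m).toNat)) atTop
      (𝓝 (∏' n : ℕ, (1 - q^(2*n+2)))) := (PqTendsto hq).comp t2
  have h2N : Tendsto (fun N : ℕ => Pq q (2*N)) atTop
      (𝓝 (∏' n : ℕ, (1 - q^(2*n+2)))) := (PqTendsto hq).comp tendsto_two_mul
  have main := (((h2N.div hk (LP_ne_zero hq)).mul (h2N.div hk' (LP_ne_zero hq))).mul_const
    (q^(m^2) * x^m))
  rw [div_self (LP_ne_zero hq), one_mul, one_mul] at main
  refine main.congr' ?_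
  filter_upwards [eventually_ge_atTop (m.natAbs+1)] with N hN
  rw [cc_pos q x N m (by omega) (by omega)]
  unfold gb
  rw [show 2*N - (((N:ℤ))+m).toNat = (((N:ℤ))-m).toNat by omega]
  have h1 := hPq hq (((N:ℤ)+m).toNat)
  have h2 := hPq hq (((N:ℤ)-m).toNat)
  simp only [Pi.div_apply]
  field_simp

lemma F_bound (hq : ‖q‖ < 1) (hq0 : q ≠ 0) (hx : x ≠ 0) :
    ∃ C : ℝ, 0 ≤ C ∧ ∀ (N : ℕ) (m : ℤ),
      ‖Pq q (2*N) * cc q x N m‖ ≤ C * (‖q‖^(m.natAbs^2) * ‖x‖^m) := by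
  obtain ⟨U, hU⟩ := (PqTendsto hq).norm.bddAbove_range
  have hU' : ∀ n, ‖Pq q n‖ ≤ max U 1 := fun n =>
    le_max_of_le_left (hU ⟨n, rfl⟩)
  have hpos : ∀ n, (0:ℝ) < ‖Pq q n‖ := fun n => norm_pos_iff.2 (hPq hq n)
  have hinvT : Tendsto (fun n => ‖Pq q n‖⁻¹) atTop (𝓝 ‖∏' n : ℕ, (1 - q^(2*n+2))‖⁻¹) :=
    ((PqTendsto hq).norm).inv₀ (norm_ne_zero_iff.2 (LP_ne_zero hq))
  obtain ⟨M, hM⟩ := hinvT.bddAbove_range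
  have hM' : ∀ n, ‖Pq q n‖⁻¹ ≤ max M 1 := fun n => le_max_of_le_left (hM ⟨n, rfl⟩)
  refine ⟨(max U 1 * max U 1) * (max M 1 * max M 1), by positivity, fun N m => ?_⟩
  by_cases hmem : -(N:ℤ) ≤ m ∧ m ≤ (N:ℤ)
  · rw [cc_pos q x N m hmem.1 hmem.2]
    unfold gb
    have e1 : Pq q (2*N) * (Pq q (2*N) / (Pq q (((N:ℤ)+m).toNat) * Pq q (2*N - (((N:ℤ)+m).toNat)))
          * q^(m^2) * x^m)
        = (Pq q (2*N) * Pq q (2*N) * ((Pq q (((N:ℤ)+m).toNat))⁻¹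
            * (Pq q (2*N - (((N:ℤ)+m).toNat)))⁻¹)) * (q^(m^2) * x^m) := by
      rw [div_eq_mul_inv, mul_inv]
      ring
    rw [e1]
    simp only [norm_mul, norm_inv, norm_q_zpow_sq]
    rw [norm_zpow]
    have hle : ‖Pq q (2*N)‖ * ‖Pq q (2*N)‖ * (‖Pq q (((N:ℤ)+m).toNat)‖⁻¹
          * ‖Pq q (2*N - (((N:ℤ)+m).toNat))‖⁻¹)
        ≤ (max U 1 * max U 1) * (max M 1 * max M 1) := by
      have g1 := hU' (2*N)
      have g2 := hM' (((N:ℤ)+m).toNat)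
      have g3 := hM' (2*N - (((N:ℤ)+m).toNat))
      have n1 : (0:ℝ) ≤ ‖Pq q (2*N)‖ := norm_nonneg _
      have n2 : (0:ℝ) ≤ ‖Pq q (((N:ℤ)+m).toNat)‖⁻¹ := by positivity
      have n3 : (0:ℝ) ≤ ‖Pq q (2*N - (((N:ℤ)+m).toNat))‖⁻¹ := by positivity
      gcongr
    have hx0 : (0:ℝ) < ‖x‖ := norm_pos_iff.2 hx
    refine mul_le_mul_of_nonneg_right hle
      (mul_nonneg (pow_nonneg (norm_nonneg q) _) (zpow_pos hx0 m).le)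
  · rw [cc_zero q x N m (by omega), mul_zero, norm_zero]
    have h1 : (0:ℝ) < ‖x‖ := norm_pos_iff.2 hx
    have : (0:ℝ) ≤ ‖q‖^(m.natAbs^2) * ‖x‖^m :=
      mul_nonneg (pow_nonneg (norm_nonneg q) _) (zpow_pos h1 m).le
    positivity

lemma summable_bound (hq : ‖q‖ < 1) (hx : x ≠ 0) (C : ℝ) :
    Summable (fun m : ℤ => C * (‖q‖^(m.natAbs^2) * ‖x‖^m)) := by
  apply Summable.mul_left
  have hx0 : (0:ℝ) < ‖x‖ := norm_pos_iff.2 hx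
  apply Summable.of_nat_of_neg
  · refine (summable_aux (norm_nonneg q) hq hx0.le).congr fun n => ?_
    simp [zpow_natCast]
  · refine (summable_aux (norm_nonneg q) hq (σ := ‖x‖⁻¹) (by positivity)).congr fun n => ?_
    rw [Int.natAbs_neg, Int.natAbs_natCast, zpow_neg, zpow_natCast, inv_pow]

end Analysis2

lemma core {q x : ℂ} (hq : ‖q‖ < 1) (hq0 : q ≠ 0) (hx : x ≠ 0) :
    Multipliable (fun n : ℕ => (1 + x * q^(2*n+1)) * (1 + x⁻¹ * q^(2*n+1)) * (1 - q^(2*n+2))) ∧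
    (∑' m : ℤ, q^(m^2) * x^m)
      = ∏' n : ℕ, ((1 + x * q^(2*n+1)) * (1 + x⁻¹ * q^(2*n+1)) * (1 - q^(2*n+2))) := by
  refine ⟨multA hq, ?_⟩
  obtain ⟨C, hC0, hCb⟩ := F_bound hq hq0 hx
  have hdom : Tendsto (fun N => ∑' m : ℤ, Pq q (2*N) * cc q x N m) atTop
      (𝓝 (∑' m : ℤ, q^(m^2) * x^m)) :=
    tendsto_tsum_of_dominated_convergence (summable_bound hq hx C) (F_tendsto hq hq0 hx)
      (Filter.Eventually.of_forall fun N m => hCb N m)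
  have heq : ∀ N, ∑' m : ℤ, Pq q (2*N) * cc q x N m
      = Pq q (2*N) * ∏ j ∈ Finset.range N, ((1 + x * q^(2*j+1)) * (1 + x⁻¹ * q^(2*j+1))) := by
    intro N
    rw [finJTP hq hq0 hx N, Finset.mul_sum]
    exact tsum_eq_sum fun m hm => by
      rw [cc_zero q x N m (by simp [Finset.mem_Icc] at hm; omega), mul_zero]
  exact tendsto_nhds_unique (hdom.congr heq) (lhsTendsto hq)

end JTPaux

/-- The Jacobi theta series
`ϑ(τ,z) = Σ_{n∈ℤ} (−1)^n exp(πi(2n+1)²τ/4 + πi(2n+1)z)`. -/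
noncomputable def thetaJ (τ z : ℂ) : ℂ :=
  ∑' n : ℤ, (-1 : ℂ) ^ n *
    Complex.exp (Real.pi * Complex.I * ((2 * n + 1) ^ 2 * τ / 4 + (2 * n + 1) * z))

/-- The factor of the triple product indexed by `n : ℕ` (corresponding to `m = n + 1 ≥ 1`
in the classical formula): `(1 − q^{m−1}ζ)(1 − q^m ζ^{−1})(1 − q^m)`. -/
noncomputable def tripleFactor (τ z : ℂ) (n : ℕ) : ℂ :=
  (1 - Complex.exp (2 * Real.pi * Complex.I * τ) ^ n * Complex.exp (2 * Real.pi * Complex.I * z)) *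
  (1 - Complex.exp (2 * Real.pi * Complex.I * τ) ^ (n + 1) *
      Complex.exp (-(2 * Real.pi * Complex.I * z))) *
  (1 - Complex.exp (2 * Real.pi * Complex.I * τ) ^ (n + 1))

/-- The Jacobi triple product expansion:
`ϑ(τ,z) = −q^{1/8} ζ^{−1/2} ∏_{n≥1} (1 − q^{n−1}ζ)(1 − q^n ζ^{−1})(1 − q^n)`,
where `q^{1/8} = exp(πiτ/4)` and `ζ^{−1/2} = exp(−πiz)`; the infinite product
converges. -/
theorem statement10 (τ z : ℂ) (hτ : 0 < τ.im) :
    Multipliable (tripleFactor τ z) ∧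
    thetaJ τ z = -Complex.exp (Real.pi * Complex.I * τ / 4) *
      Complex.exp (-(Real.pi * Complex.I * z)) * ∏' n : ℕ, tripleFactor τ z n := by
  set q0 : ℂ := Complex.exp (Real.pi * Complex.I * τ) with hq0def
  set x0 : ℂ := -Complex.exp (2 * Real.pi * Complex.I * z - Real.pi * Complex.I * τ) with hx0def
  have hq0 : q0 ≠ 0 := Complex.exp_ne_zero _
  have hx : x0 ≠ 0 := neg_ne_zero.2 (Complex.exp_ne_zero _)
  have hre : ((Real.pi : ℂ) * Complex.I * τ).re = -(Real.pi * τ.im) := by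
    simp [Complex.mul_re, Complex.mul_im]
  have hq : ‖q0‖ < 1 := by
    rw [hq0def, Complex.norm_exp, hre, Real.exp_lt_one_iff]
    have := Real.pi_pos
    nlinarith
  have hA_eq : ∀ n : ℕ,
      (1 + x0 * q0^(2*n+1)) * (1 + x0⁻¹ * q0^(2*n+1)) * (1 - q0^(2*n+2))
        = tripleFactor τ z n := by
    intro n
    have e1 : x0 * q0^(2*n+1)
        = -(Complex.exp (2 * Real.pi * Complex.I * τ) ^ n
            * Complex.exp (2 * Real.pi * Complex.I * z)) := by
      rw [hx0def, hq0def, ← Complex.exp_nat_mul, ← Complex.exp_nat_mul, neg_mul,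
        ← Complex.exp_add, ← Complex.exp_add]
      congr 2
      push_cast
      ring
    have e2 : x0⁻¹ * q0^(2*n+1)
        = -(Complex.exp (2 * Real.pi * Complex.I * τ) ^ (n+1)
            * Complex.exp (-(2 * Real.pi * Complex.I * z))) := by
      rw [hx0def, hq0def, inv_neg, ← Complex.exp_neg, ← Complex.exp_nat_mul,
        ← Complex.exp_nat_mul, neg_mul, ← Complex.exp_add, ← Complex.exp_add]
      congr 2
      push_cast
      ring
    have e3 : q0^(2*n+2) = Complex.exp (2 * Real.pi * Complex.I * τ) ^ (n+1) := by
      rw [hq0def, ← Complex.exp_nat_mul, ← Complex.exp_nat_mul]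
      congr 1
      push_cast
      ring
    rw [e1, e2, e3, tripleFactor]
    ring
  obtain ⟨hmult, hsum⟩ := core hq hq0 hx
  constructor
  · exact hmult.congr hA_eq
  · have keyterm : ∀ n : ℤ,
        (-Complex.exp (Real.pi * Complex.I * τ / 4) * Complex.exp (-(Real.pi * Complex.I * z)))
            * (q0^((n+1)^2) * x0^(n+1))
          = (-1 : ℂ) ^ n *
            Complex.exp (Real.pi * Complex.I * ((2 * n + 1) ^ 2 * τ / 4 + (2 * n + 1) * z)) := by
      intro n
      rw [hx0def, hq0def, show -Complex.exp (2 * Real.pi * Complex.I * z - Real.pi * Complex.I * τ)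
          = (-1) * Complex.exp (2 * Real.pi * Complex.I * z - Real.pi * Complex.I * τ) by ring,
        mul_zpow, zpow_add_one₀ (by norm_num : (-1:ℂ) ≠ 0), ← Complex.exp_int_mul,
        ← Complex.exp_int_mul]
      calc -Complex.exp (Real.pi * Complex.I * τ / 4) * Complex.exp (-(Real.pi * Complex.I * z)) *
            (Complex.exp (((n+1)^2 : ℤ) * (Real.pi * Complex.I * τ)) *
              ((-1:ℂ)^n * (-1) *
                Complex.exp (((n+1) : ℤ) * (2 * Real.pi * Complex.I * z - Real.pi * Complex.I * τ))))
          = (-1:ℂ)^n * Complex.exp (Real.pi * Complex.I * τ / 4 + -(Real.pi * Complex.I * z)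
              + ((n+1)^2 : ℤ) * (Real.pi * Complex.I * τ)
              + ((n+1) : ℤ) * (2 * Real.pi * Complex.I * z - Real.pi * Complex.I * τ)) := by
            rw [Complex.exp_add, Complex.exp_add, Complex.exp_add]
            ring
        _ = (-1 : ℂ) ^ n *
            Complex.exp (Real.pi * Complex.I * ((2 * n + 1) ^ 2 * τ / 4 + (2 * n + 1) * z)) := by
            congr 1
            congr 1
            push_cast
            ring
    calc thetaJ τ z
        = ∑' n : ℤ, ((-Complex.exp (Real.pi * Complex.I * τ / 4)
            * Complex.exp (-(Real.pi * Complex.I * z))) * (q0^((n+1)^2) * x0^(n+1))) :=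
          (tsum_congr fun n => (keyterm n).symm)
      _ = ∑' m : ℤ, ((-Complex.exp (Real.pi * Complex.I * τ / 4)
            * Complex.exp (-(Real.pi * Complex.I * z))) * (q0^(m^2) * x0^m)) :=
          Equiv.tsum_eq (Equiv.addRight (1:ℤ))
            (fun m => (-Complex.exp (Real.pi * Complex.I * τ / 4)
              * Complex.exp (-(Real.pi * Complex.I * z))) * (q0^(m^2) * x0^m))
      _ = (-Complex.exp (Real.pi * Complex.I * τ / 4)
            * Complex.exp (-(Real.pi * Complex.I * z))) * ∑' m : ℤ, (q0^(m^2) * x0^m) :=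
          tsum_mul_left
      _ = -Complex.exp (Real.pi * Complex.I * τ / 4)
            * Complex.exp (-(Real.pi * Complex.I * z)) * ∏' n : ℕ, tripleFactor τ z n := by
          rw [hsum, tprod_congr hA_eq]
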